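/- Let K be a field and P, Q, R ∈ K[x] with no common factor. Let (p₁,q₁,r₁), (p₂,q₂,r₂) be a basis of the syzygy module of P, Q, R, and let α₁,β₁,γ₁,α₂,β₂,γ₂ ∈ K. Then det of the 2×2 matrix with entries M₁₁ = α₁p₁P + β₁q₁Q + γ₁r₁R, M₁₂ = α₂p₁P + β₂q₁Q + γ₂r₁R, M₂₁ = α₁p₂P + β₁q₂Q + γ₁r₂R, M₂₂ = α₂p₂P + β₂q₂Q + γ₂r₂R is a K-scalar multiple of the product PQR. -/

import Mathlib

open Polynomial

/-- The module of syzygies between three univariate polynomials `P, Q, R`: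
triples `(p, q, r)` with `p*P + q*Q + r*R = 0`, as a submodule of `(K[x])³`. -/
noncomputable def syzygyModule {K : Type*} [Field K] (P Q R : K[X]) :
    Submodule K[X] (Fin 3 → K[X]) :=
  LinearMap.ker
    (P • (LinearMap.proj 0 : (Fin 3 → K[X]) →ₗ[K[X]] K[X])
      + Q • (LinearMap.proj 1 : (Fin 3 → K[X]) →ₗ[K[X]] K[X])
      + R • (LinearMap.proj 2 : (Fin 3 → K[X]) →ₗ[K[X]] K[X]))

lemma mem_syzygyModule_iff {K : Type*} [Field K] (P Q R : K[X]) (v : Fin 3 → K[X]) :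
    v ∈ syzygyModule P Q R ↔ P * v 0 + Q * v 1 + R * v 2 = 0 := by
  simp [syzygyModule, LinearMap.mem_ker, smul_eq_mul]

section Aux

variable {K : Type*} [Field K]
    (P Q R p₁ q₁ r₁ p₂ q₂ r₂ : K[X])
    (h₁ : (![p₁, q₁, r₁] : Fin 3 → K[X]) ∈ syzygyModule P Q R)
    (h₂ : (![p₂, q₂, r₂] : Fin 3 → K[X]) ∈ syzygyModule P Q R)
    (b : Module.Basis (Fin 2) K[X] (syzygyModule P Q R))
    (hb0 : b 0 = ⟨![p₁, q₁, r₁], h₁⟩) (hb1 : b 1 = ⟨![p₂, q₂, r₂], h₂⟩)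

include h₁ h₂ hb0 hb1

lemma dvd_both (π : K[X]) (hπ : Irreducible π) (f g : K[X])
    (hp : π ∣ f * p₁ + g * p₂) (hq : π ∣ f * q₁ + g * q₂) (hr : π ∣ f * r₁ + g * r₂) :
    π ∣ f ∧ π ∣ g := by
  have e1 : P * p₁ + Q * q₁ + R * r₁ = 0 := by
    simpa using (mem_syzygyModule_iff P Q R _).1 h₁
  have e2 : P * p₂ + Q * q₂ + R * r₂ = 0 := by
    simpa using (mem_syzygyModule_iff P Q R _).1 h₂
  obtain ⟨u₀, hu₀⟩ := hp
  obtain ⟨u₁, hu₁⟩ := hq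
  obtain ⟨u₂, hu₂⟩ := hr
  have hu : (![u₀, u₁, u₂] : Fin 3 → K[X]) ∈ syzygyModule P Q R := by
    rw [mem_syzygyModule_iff]
    have hz : π * (P * u₀ + Q * u₁ + R * u₂) = 0 := by
      linear_combination (-P) * hu₀ + (-Q) * hu₁ + (-R) * hu₂ + f * e1 + g * e2
    have := mul_eq_zero.mp hz
    simpa using this.resolve_left hπ.ne_zero
  set u : syzygyModule P Q R := ⟨![u₀, u₁, u₂], hu⟩ with hu_def
  have hrepr : u = b.repr u 0 • b 0 + b.repr u 1 • b 1 := by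
    have := b.sum_repr u
    rw [Fin.sum_univ_two] at this
    exact this.symm
  have hw : (π : K[X]) • u
      = f • (⟨![p₁, q₁, r₁], h₁⟩ : syzygyModule P Q R) + g • ⟨![p₂, q₂, r₂], h₂⟩ := by
    apply Subtype.ext
    funext i
    fin_cases i <;>
      simp [hu_def, smul_eq_mul, ← hu₀, ← hu₁, ← hu₂]
  have key : f • b 0 + g • b 1 = (π * b.repr u 0) • b 0 + (π * b.repr u 1) • b 1 := by
    rw [hb0, hb1, ← hw]
    conv_lhs => rw [hrepr]
    rw [smul_add, smul_smul, smul_smul, ← hb0, ← hb1]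
  have h0 : f = π * b.repr u 0 := by
    have := congrArg (fun x => b.repr x 0) key
    simpa [Module.Basis.repr_self, Finsupp.single_apply] using this
  have h1' : g = π * b.repr u 1 := by
    have := congrArg (fun x => b.repr x 1) key
    simpa [Module.Basis.repr_self, Finsupp.single_apply] using this
  exact ⟨⟨_, h0⟩, ⟨_, h1'⟩⟩

lemma no_common_irreducible (π : K[X]) (hπ : Irreducible π)
    (hd3 : π ∣ p₁ * q₂ - p₂ * q₁) (hd2 : π ∣ r₁ * p₂ - r₂ * p₁)
    (hd1 : π ∣ q₁ * r₂ - q₂ * r₁) : False := by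
  by_cases h : π ∣ p₁ ∧ π ∣ q₁ ∧ π ∣ r₁
  · obtain ⟨hp, hq, hr⟩ := h
    have := dvd_both P Q R p₁ q₁ r₁ p₂ q₂ r₂ h₁ h₂ b hb0 hb1 π hπ 1 0
      (by simpa using hp) (by simpa using hq) (by simpa using hr)
    exact hπ.not_isUnit (isUnit_of_dvd_one this.1)
  · have h' : ¬ π ∣ p₁ ∨ ¬ π ∣ q₁ ∨ ¬ π ∣ r₁ := by tauto
    rcases h' with h'|h'|h'
    · have := dvd_both P Q R p₁ q₁ r₁ p₂ q₂ r₂ h₁ h₂ b hb0 hb1 π hπ p₂ (-p₁)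
        (by rw [show p₂ * p₁ + -p₁ * p₂ = (0 : K[X]) from by ring]; exact dvd_zero _)
        (by rw [show p₂ * q₁ + -p₁ * q₂ = -(p₁ * q₂ - p₂ * q₁) from by ring]
            exact dvd_neg.mpr hd3)
        (by rw [show p₂ * r₁ + -p₁ * r₂ = r₁ * p₂ - r₂ * p₁ from by ring]; exact hd2)
      exact h' (dvd_neg.mp this.2)
    · have := dvd_both P Q R p₁ q₁ r₁ p₂ q₂ r₂ h₁ h₂ b hb0 hb1 π hπ q₂ (-q₁)
        (by rw [show q₂ * p₁ + -q₁ * p₂ = p₁ * q₂ - p₂ * q₁ from by ring]; exact hd3)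
        (by rw [show q₂ * q₁ + -q₁ * q₂ = (0 : K[X]) from by ring]; exact dvd_zero _)
        (by rw [show q₂ * r₁ + -q₁ * r₂ = -(q₁ * r₂ - q₂ * r₁) from by ring]
            exact dvd_neg.mpr hd1)
      exact h' (dvd_neg.mp this.2)
    · have := dvd_both P Q R p₁ q₁ r₁ p₂ q₂ r₂ h₁ h₂ b hb0 hb1 π hπ r₂ (-r₁)
        (by rw [show r₂ * p₁ + -r₁ * p₂ = -(r₁ * p₂ - r₂ * p₁) from by ring]
            exact dvd_neg.mpr hd2)
        (by rw [show r₂ * q₁ + -r₁ * q₂ = q₁ * r₂ - q₂ * r₁ from by ring]; exact hd1)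
        (by rw [show r₂ * r₁ + -r₁ * r₂ = (0 : K[X]) from by ring]; exact dvd_zero _)
      exact h' (dvd_neg.mp this.2)

lemma minor_eq_const_mul (hcop : ∀ d : K[X], d ∣ P → d ∣ Q → d ∣ R → IsUnit d) :
    ∃ e : K, p₁ * q₂ - p₂ * q₁ = C e * R := by
  classical
  have e1 : P * p₁ + Q * q₁ + R * r₁ = 0 := by
    simpa using (mem_syzygyModule_iff P Q R _).1 h₁
  have e2 : P * p₂ + Q * q₂ + R * r₂ = 0 := by
    simpa using (mem_syzygyModule_iff P Q R _).1 h₂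
  by_cases hR : R = 0
  · -- Here gcd P Q is a unit, so P and Q are coprime, and the minor vanishes.
    subst hR
    refine ⟨0, ?_⟩
    rw [map_zero, zero_mul]
    have hco : IsCoprime P Q :=
      EuclideanDomain.gcd_isUnit_iff.mp
        (hcop _ (EuclideanDomain.gcd_dvd_left P Q) (EuclideanDomain.gcd_dvd_right P Q)
          (dvd_zero _))
    simp only [zero_mul, add_zero] at e1 e2
    by_cases hQ : Q = 0
    · have hP : IsUnit P := by
        rw [hQ] at hco; exact isCoprime_zero_right.mp hco
      have hP0 : P ≠ 0 := hP.ne_zero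
      have hp1 : p₁ = 0 := by
        rw [hQ, zero_mul, add_zero] at e1
        exact (mul_eq_zero.mp e1).resolve_left hP0
      have hp2 : p₂ = 0 := by
        rw [hQ, zero_mul, add_zero] at e2
        exact (mul_eq_zero.mp e2).resolve_left hP0
      rw [hp1, hp2]; ring
    · have hQp1 : Q ∣ P * p₁ := ⟨-q₁, by linear_combination e1⟩
      have hQp2 : Q ∣ P * p₂ := ⟨-q₂, by linear_combination e2⟩
      obtain ⟨t₁, ht₁⟩ := hco.symm.dvd_of_dvd_mul_left hQp1
      obtain ⟨t₂, ht₂⟩ := hco.symm.dvd_of_dvd_mul_left hQp2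
      have hq1 : q₁ = -(P * t₁) := by
        have hz : Q * (q₁ + P * t₁) = 0 := by
          rw [ht₁] at e1; linear_combination e1
        linear_combination (mul_eq_zero.mp hz).resolve_left hQ
      have hq2 : q₂ = -(P * t₂) := by
        have hz : Q * (q₂ + P * t₂) = 0 := by
          rw [ht₂] at e2; linear_combination e2
        linear_combination (mul_eq_zero.mp hz).resolve_left hQ
      rw [ht₁, ht₂, hq1, hq2]; ring
  · have d31 : (p₁ * q₂ - p₂ * q₁) * P = (q₁ * r₂ - q₂ * r₁) * R := by
      linear_combination q₂ * e1 - q₁ * e2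
    have d32 : (p₁ * q₂ - p₂ * q₁) * Q = (r₁ * p₂ - r₂ * p₁) * R := by
      linear_combination p₁ * e2 - p₂ * e1
    set g₁ := EuclideanDomain.gcd Q R with hg₁
    have hgu : IsUnit (EuclideanDomain.gcd P g₁) :=
      hcop _ (EuclideanDomain.gcd_dvd_left _ _)
        ((EuclideanDomain.gcd_dvd_right P g₁).trans (EuclideanDomain.gcd_dvd_left Q R))
        ((EuclideanDomain.gcd_dvd_right P g₁).trans (EuclideanDomain.gcd_dvd_right Q R))
    obtain ⟨A, B, C', hABC⟩ : ∃ A B C' : K[X],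
        EuclideanDomain.gcd P g₁ = P * A + Q * B + R * C' :=
      ⟨EuclideanDomain.gcdA P g₁,
        EuclideanDomain.gcdA Q R * EuclideanDomain.gcdB P g₁,
        EuclideanDomain.gcdB Q R * EuclideanDomain.gcdB P g₁, by
          rw [EuclideanDomain.gcd_eq_gcd_ab P g₁, hg₁, EuclideanDomain.gcd_eq_gcd_ab Q R]
          ring⟩
    have t1 : R ∣ (p₁ * q₂ - p₂ * q₁) * P := ⟨q₁ * r₂ - q₂ * r₁, by linear_combination d31⟩
    have t2 : R ∣ (p₁ * q₂ - p₂ * q₁) * Q := ⟨r₁ * p₂ - r₂ * p₁, by linear_combination d32⟩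
    have hRdvd : R ∣ (p₁ * q₂ - p₂ * q₁) * EuclideanDomain.gcd P g₁ := by
      rw [hABC, mul_add, mul_add]
      refine dvd_add (dvd_add ?_ ?_) ?_
      · rw [← mul_assoc]; exact t1.mul_right A
      · rw [← mul_assoc]; exact t2.mul_right B
      · exact Dvd.dvd.mul_left (dvd_mul_right R C') _
    have hRD : R ∣ p₁ * q₂ - p₂ * q₁ := by
      obtain ⟨vinv, hv⟩ := hgu.exists_right_inv
      obtain ⟨w, hw⟩ := hRdvd
      exact ⟨w * vinv, by linear_combination vinv * hw - (p₁ * q₂ - p₂ * q₁) * hv⟩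
    obtain ⟨E, hE⟩ := hRD
    have hD1 : q₁ * r₂ - q₂ * r₁ = E * P :=
      mul_right_cancel₀ hR (by linear_combination (-1 : K[X]) * d31 + P * hE)
    have hD2 : r₁ * p₂ - r₂ * p₁ = E * Q :=
      mul_right_cancel₀ hR (by linear_combination (-1 : K[X]) * d32 + Q * hE)
    have hEc : E = 0 ∨ IsUnit E := by
      by_contra hcon
      push_neg at hcon
      obtain ⟨hE0, hEu⟩ := hcon
      obtain ⟨π, hπ, hπE⟩ := WfDvdMonoid.exists_irreducible_factor hEu hE0
      exact no_common_irreducible P Q R p₁ q₁ r₁ p₂ q₂ r₂ h₁ h₂ b hb0 hb1 π hπ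
        (hE ▸ hπE.mul_left R) (hD2 ▸ hπE.mul_right Q) (hD1 ▸ hπE.mul_right P)
    rcases hEc with h0 | hu
    · exact ⟨0, by rw [map_zero, zero_mul, hE, h0, mul_zero]⟩
    · obtain ⟨e, _, hce⟩ := Polynomial.isUnit_iff.mp hu
      exact ⟨e, by rw [hE, hce, mul_comm]⟩

end Aux

theorem det_combination_is_multiple_of_PQR {K : Type*} [Field K]
    (P Q R p₁ q₁ r₁ p₂ q₂ r₂ : K[X])
    (hcop : ∀ d : K[X], d ∣ P → d ∣ Q → d ∣ R → IsUnit d)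
    (h₁ : (![p₁, q₁, r₁] : Fin 3 → K[X]) ∈ syzygyModule P Q R)
    (h₂ : (![p₂, q₂, r₂] : Fin 3 → K[X]) ∈ syzygyModule P Q R)
    (b : Module.Basis (Fin 2) K[X] (syzygyModule P Q R))
    (hb0 : b 0 = ⟨![p₁, q₁, r₁], h₁⟩) (hb1 : b 1 = ⟨![p₂, q₂, r₂], h₂⟩)
    (α₁ β₁ γ₁ α₂ β₂ γ₂ : K) :
    ∃ c : K,
      (C α₁ * p₁ * P + C β₁ * q₁ * Q + C γ₁ * r₁ * R)
          * (C α₂ * p₂ * P + C β₂ * q₂ * Q + C γ₂ * r₂ * R)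
        - (C α₂ * p₁ * P + C β₂ * q₁ * Q + C γ₂ * r₁ * R)
          * (C α₁ * p₂ * P + C β₁ * q₂ * Q + C γ₁ * r₂ * R)
        = C c * (P * Q * R) := by
  obtain ⟨e, hE3⟩ := minor_eq_const_mul P Q R p₁ q₁ r₁ p₂ q₂ r₂ h₁ h₂ b hb0 hb1 hcop
  have e1 : P * p₁ + Q * q₁ + R * r₁ = 0 := by
    simpa using (mem_syzygyModule_iff P Q R _).1 h₁
  have e2 : P * p₂ + Q * q₂ + R * r₂ = 0 := by
    simpa using (mem_syzygyModule_iff P Q R _).1 h₂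
  refine ⟨e * (α₁ * β₂ - α₂ * β₁ - (α₁ * γ₂ - α₂ * γ₁) + (β₁ * γ₂ - β₂ * γ₁)), ?_⟩
  simp only [map_mul, map_add, map_sub]
  linear_combination
    ((C α₁ * C β₂ - C α₂ * C β₁ - (C α₁ * C γ₂ - C α₂ * C γ₁)
        + (C β₁ * C γ₂ - C β₂ * C γ₁)) * P * Q) * hE3
    + (-(C α₁ * C γ₂ - C α₂ * C γ₁) * P * p₂ - (C β₁ * C γ₂ - C β₂ * C γ₁) * Q * q₂) * e1
    + ((C α₁ * C γ₂ - C α₂ * C γ₁) * P * p₁ + (C β₁ * C γ₂ - C β₂ * C γ₁) * Q * q₁) * e2
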